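/- Let m ≥ 1 be an integer, b₁ > 0, b₂ > 0, and set x_i = (1/m)·arctan(b₁/b₂) + (i−1)·π/m for i = 1,...,2m. Then for every trigonometric polynomial q of degree at most m−1, (1/(2m)) · ∑_{i=1}^{2m} ( q(x_i) + b₁ sin(m x_i) + b₂ cos(m x_i) )² ≥ b₁² + b₂². -/

import Mathlib

open Real

private lemma sum_alt_exp (m j : ℕ) (hm : 1 ≤ m) (hj : j < m) (t : ℝ) :
    ∑ k ∈ Finset.range (2 * m),
      ((-1 : ℂ) ^ k * Complex.exp (((j : ℝ) * (t + k * Real.pi / m) : ℝ) * Complex.I)) = 0 := by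
  have hm0 : (m : ℝ) ≠ 0 := Nat.cast_ne_zero.mpr (by omega)
  have hmC : (m : ℂ) ≠ 0 := Nat.cast_ne_zero.mpr (by omega)
  set ω : ℂ := Complex.exp ((((j : ℝ) + m) * Real.pi / m : ℝ) * Complex.I) with hω
  have hω1 : ω ≠ 1 := by
    rw [hω, Ne, Complex.exp_eq_one_iff]
    rintro ⟨n, hn⟩
    have him := congrArg Complex.im hn
    simp [Complex.ofReal_mul, Complex.ofReal_div, Complex.ofReal_add] at him
    -- him : ((j : ℝ) + m) * π / m = n * (2 * π)
    have hπ := Real.pi_pos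
    have h2 : ((j : ℝ) + m) = n * (2 * m) := by
      field_simp at him
      nlinarith [him]
    have hj' : (j : ℝ) < m := by exact_mod_cast hj
    have hm' : (1 : ℝ) ≤ m := by exact_mod_cast hm
    rcases le_or_gt 1 (n : ℝ) with h | h
    · nlinarith
    · have : (n : ℝ) ≤ 0 := by
        have : (n : ℤ) < 1 := by exact_mod_cast h
        have : (n : ℤ) ≤ 0 := by omega
        exact_mod_cast this
      nlinarith [Nat.cast_nonneg (α := ℝ) j]
  have hωpow : ω ^ (2 * m) = 1 := by
    rw [hω, ← Complex.exp_nat_mul]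
    have : ((2 * m : ℕ) : ℂ) * (((((j : ℝ) + m) * Real.pi / m : ℝ)) * Complex.I)
        = (((j : ℤ) + m) : ℤ) * (2 * Real.pi * Complex.I) := by
      push_cast
      field_simp [hmC]
    rw [this, Complex.exp_int_mul_two_pi_mul_I]
  have hrw : ∀ k ∈ Finset.range (2 * m),
      (-1 : ℂ) ^ k * Complex.exp (((j : ℝ) * (t + k * Real.pi / m) : ℝ) * Complex.I)
        = Complex.exp (((j : ℝ) * t : ℝ) * Complex.I) * ω ^ k := by
    intro k _
    have h1 : (-1 : ℂ) ^ k = Complex.exp ((k : ℕ) * ((Real.pi : ℂ) * Complex.I)) := by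
      rw [Complex.exp_nat_mul, Complex.exp_pi_mul_I]
    rw [h1, hω, ← Complex.exp_nat_mul, ← Complex.exp_add, ← Complex.exp_add]
    congr 1
    push_cast
    field_simp [hmC]
    ring
  rw [Finset.sum_congr rfl hrw, ← Finset.mul_sum]
  rw [geom_sum_eq hω1, hωpow]
  simp

private lemma sum_alt_cos (m j : ℕ) (hm : 1 ≤ m) (hj : j < m) (t : ℝ) :
    ∑ k ∈ Finset.range (2 * m), (-1 : ℝ) ^ k * Real.cos ((j : ℝ) * (t + k * Real.pi / m)) = 0 := by
  have h := congrArg Complex.re (sum_alt_exp m j hm hj t)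
  rw [Complex.re_sum] at h
  calc ∑ k ∈ Finset.range (2 * m), (-1 : ℝ) ^ k * Real.cos ((j : ℝ) * (t + k * Real.pi / m))
      = ∑ k ∈ Finset.range (2 * m),
        ((-1 : ℂ) ^ k * Complex.exp ((((j : ℝ) * (t + k * Real.pi / m) : ℝ)) * Complex.I)).re := by
        refine Finset.sum_congr rfl fun k _ => ?_
        rw [show ((-1 : ℂ) ^ k) = (((-1 : ℝ) ^ k : ℝ) : ℂ) by push_cast; ring,
          Complex.re_ofReal_mul, Complex.exp_ofReal_mul_I_re]
    _ = 0 := h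

private lemma sum_alt_sin (m j : ℕ) (hm : 1 ≤ m) (hj : j < m) (t : ℝ) :
    ∑ k ∈ Finset.range (2 * m), (-1 : ℝ) ^ k * Real.sin ((j : ℝ) * (t + k * Real.pi / m)) = 0 := by
  have h := congrArg Complex.im (sum_alt_exp m j hm hj t)
  rw [Complex.im_sum] at h
  calc ∑ k ∈ Finset.range (2 * m), (-1 : ℝ) ^ k * Real.sin ((j : ℝ) * (t + k * Real.pi / m))
      = ∑ k ∈ Finset.range (2 * m),
        ((-1 : ℂ) ^ k * Complex.exp ((((j : ℝ) * (t + k * Real.pi / m) : ℝ)) * Complex.I)).im := by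
        refine Finset.sum_congr rfl fun k _ => ?_
        rw [show ((-1 : ℂ) ^ k) = (((-1 : ℝ) ^ k : ℝ) : ℂ) by push_cast; ring,
          Complex.im_ofReal_mul, Complex.exp_ofReal_mul_I_im]
    _ = 0 := h

theorem T_criterion_lower_bound (m : ℕ) (hm : 1 ≤ m) (b₁ b₂ : ℝ)
    (hb₁ : 0 < b₁) (hb₂ : 0 < b₂) (q : ℝ → ℝ) (q₀ : ℝ) (α β : ℕ → ℝ)
    (hq : ∀ x, q x = q₀ + ∑ j ∈ Finset.Icc 1 (m - 1),
      (α j * Real.cos (j * x) + β j * Real.sin (j * x))) :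
    b₁ ^ 2 + b₂ ^ 2 ≤ (1 / (2 * m)) * ∑ i ∈ Finset.Icc 1 (2 * m),
      (q ((1 / m) * Real.arctan (b₁ / b₂) + ((i : ℝ) - 1) * Real.pi / m)
        + b₁ * Real.sin (m * ((1 / m) * Real.arctan (b₁ / b₂) + ((i : ℝ) - 1) * Real.pi / m))
        + b₂ * Real.cos (m * ((1 / m) * Real.arctan (b₁ / b₂) + ((i : ℝ) - 1) * Real.pi / m))) ^ 2 := by
  have hm0 : (m : ℝ) ≠ 0 := Nat.cast_ne_zero.mpr (by omega)
  have hmpos : (0 : ℝ) < m := by positivity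
  set θ := Real.arctan (b₁ / b₂) with hθ
  set r := Real.sqrt (b₁ ^ 2 + b₂ ^ 2) with hr
  have hrpos : 0 < r := Real.sqrt_pos.mpr (by positivity)
  have hr2 : r ^ 2 = b₁ ^ 2 + b₂ ^ 2 := Real.sq_sqrt (by positivity)
  set t : ℝ := (1 / m) * θ with ht
  -- the value at the extremal frequency
  have hval : b₁ * Real.sin θ + b₂ * Real.cos θ = r := by
    have hs : Real.sqrt (1 + (b₁ / b₂) ^ 2) = r / b₂ := by
      have h1 : 1 + (b₁ / b₂) ^ 2 = (r / b₂) ^ 2 := by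
        rw [div_pow, div_pow, hr2]
        field_simp
        ring
      rw [h1, Real.sqrt_sq (by positivity)]
    rw [hθ, Real.sin_arctan, Real.cos_arctan, hs]
    field_simp
    nlinarith [hr2, hrpos]
  -- rewrite each term
  have hterm : ∀ k : ℕ,
      q (t + (k : ℝ) * Real.pi / m)
        + b₁ * Real.sin ((m : ℝ) * (t + (k : ℝ) * Real.pi / m))
        + b₂ * Real.cos ((m : ℝ) * (t + (k : ℝ) * Real.pi / m))
      = q (t + (k : ℝ) * Real.pi / m) + (-1 : ℝ) ^ k * r := by
    intro k
    have harg : (m : ℝ) * (t + (k : ℝ) * Real.pi / m) = θ + (k : ℝ) * Real.pi := by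
      rw [ht]; field_simp
    rw [harg, Real.sin_add_nat_mul_pi, Real.cos_add_nat_mul_pi]
    linear_combination ((-1 : ℝ) ^ k) * hval
  -- the alternating sum of q vanishes
  have hS : ∑ k ∈ Finset.range (2 * m), (-1 : ℝ) ^ k * q (t + (k : ℝ) * Real.pi / m) = 0 := by
    have hconst : ∑ k ∈ Finset.range (2 * m), (-1 : ℝ) ^ k = 0 := by
      have h := sum_alt_cos m 0 hm (by omega) t
      simpa using h
    calc ∑ k ∈ Finset.range (2 * m), (-1 : ℝ) ^ k * q (t + (k : ℝ) * Real.pi / m)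
        = ∑ k ∈ Finset.range (2 * m), ((-1 : ℝ) ^ k * q₀
            + ∑ j ∈ Finset.Icc 1 (m - 1), ((-1 : ℝ) ^ k * (α j * Real.cos ((j : ℝ) * (t + (k : ℝ) * Real.pi / m)))
              + (-1 : ℝ) ^ k * (β j * Real.sin ((j : ℝ) * (t + (k : ℝ) * Real.pi / m))))) := by
          refine Finset.sum_congr rfl fun k _ => ?_
          rw [hq, mul_add, Finset.mul_sum]
          congr 1
          refine Finset.sum_congr rfl fun j _ => ?_
          ring
      _ = (∑ k ∈ Finset.range (2 * m), (-1 : ℝ) ^ k) * q₀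
            + ∑ j ∈ Finset.Icc 1 (m - 1),
              (α j * ∑ k ∈ Finset.range (2 * m), (-1 : ℝ) ^ k * Real.cos ((j : ℝ) * (t + (k : ℝ) * Real.pi / m))
                + β j * ∑ k ∈ Finset.range (2 * m), (-1 : ℝ) ^ k * Real.sin ((j : ℝ) * (t + (k : ℝ) * Real.pi / m))) := by
          rw [Finset.sum_add_distrib, ← Finset.sum_mul, Finset.sum_comm]
          congr 1
          refine Finset.sum_congr rfl fun j _ => ?_
          rw [Finset.mul_sum, Finset.mul_sum, ← Finset.sum_add_distrib]
          refine Finset.sum_congr rfl fun k _ => ?_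
          ring
      _ = 0 := by
          rw [hconst, zero_mul, zero_add]
          refine Finset.sum_eq_zero fun j hj => ?_
          have hjm : j < m := by
            have := (Finset.mem_Icc.mp hj).2
            omega
          rw [sum_alt_cos m j hm hjm t, sum_alt_sin m j hm hjm t]
          ring
  -- reindex the sum
  have hreindex : ∑ i ∈ Finset.Icc 1 (2 * m),
      (q ((1 / m) * θ + ((i : ℝ) - 1) * Real.pi / m)
        + b₁ * Real.sin ((m : ℝ) * ((1 / m) * θ + ((i : ℝ) - 1) * Real.pi / m))
        + b₂ * Real.cos ((m : ℝ) * ((1 / m) * θ + ((i : ℝ) - 1) * Real.pi / m))) ^ 2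
      = ∑ k ∈ Finset.range (2 * m),
        (q (t + (k : ℝ) * Real.pi / m) + (-1 : ℝ) ^ k * r) ^ 2 := by
    rw [show Finset.Icc 1 (2 * m) = Finset.Ico 1 (2 * m + 1) by rw [Finset.Ico_add_one_right_eq_Icc],
      Finset.sum_Ico_eq_sum_range]
    refine Finset.sum_congr (by norm_num) fun k _ => ?_
    have hcast : ((1 + k : ℕ) : ℝ) - 1 = (k : ℝ) := by push_cast; ring
    rw [hcast, ← ht, hterm k]
  rw [hreindex]
  -- expand the square
  have hexp : ∑ k ∈ Finset.range (2 * m),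
      (q (t + (k : ℝ) * Real.pi / m) + (-1 : ℝ) ^ k * r) ^ 2
      = ∑ k ∈ Finset.range (2 * m), (q (t + (k : ℝ) * Real.pi / m)) ^ 2
        + 2 * r * ∑ k ∈ Finset.range (2 * m), (-1 : ℝ) ^ k * q (t + (k : ℝ) * Real.pi / m)
        + (2 * m : ℝ) * r ^ 2 := by
    rw [Finset.mul_sum, ← Finset.sum_add_distrib]
    rw [show (2 * m : ℝ) * r ^ 2 = ∑ _k ∈ Finset.range (2 * m), r ^ 2 by
      rw [Finset.sum_const, Finset.card_range]; push_cast; ring]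
    rw [← Finset.sum_add_distrib]
    refine Finset.sum_congr rfl fun k _ => ?_
    have hs : ((-1 : ℝ) ^ k) ^ 2 = 1 := by
      rw [← pow_mul, mul_comm, pow_mul, neg_one_sq, one_pow]
    nlinarith [hs]
  rw [hexp, hS]
  have hq2 : 0 ≤ ∑ k ∈ Finset.range (2 * m), (q (t + (k : ℝ) * Real.pi / m)) ^ 2 :=
    Finset.sum_nonneg fun k _ => sq_nonneg _
  rw [mul_add, mul_add]
  have h1 : (1 / (2 * (m : ℝ))) * ((2 * m : ℝ) * r ^ 2) = b₁ ^ 2 + b₂ ^ 2 := by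
    rw [hr2]; field_simp
  nlinarith [mul_nonneg (by positivity : (0:ℝ) ≤ 1 / (2 * (m:ℝ))) hq2, h1]
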